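/- For every natural number N ≥ 1 and all real numbers a, b, one has ∑_{j=1}^{N} ((N−j)/N) (cos(a j) + 1) cos(b j) ≥ −1. -/

import Mathlib

open Finset Real

private lemma reflect_cos (N : ℕ) (s : ℝ) :
    ∑ l ∈ Finset.range N, Real.cos (((N : ℝ) - l) * s)
      = ∑ l ∈ Finset.range N, Real.cos (((l : ℝ) + 1) * s) := by
  rw [← Finset.sum_range_reflect (fun l => Real.cos (((l : ℝ) + 1) * s)) N]
  refine Finset.sum_congr rfl fun l hl => ?_
  have hl' : l < N := Finset.mem_range.mp hl
  congr 2
  have h1 : l ≤ N - 1 := by omega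
  have h2 : 1 ≤ N := by omega
  push_cast [Nat.cast_sub h1, Nat.cast_sub h2]
  ring

private lemma dsum (N : ℕ) (s : ℝ) :
    ∑ k ∈ Finset.range N, ∑ l ∈ Finset.range N, Real.cos (((k : ℝ) - l) * s)
      = 2 * (∑ j ∈ Finset.range N, ((N : ℝ) - j) * Real.cos (j * s)) - N := by
  induction N with
  | zero => simp
  | succ n ih =>
    have hneg : ∑ k ∈ Finset.range n, Real.cos (((k : ℝ) - n) * s)
        = ∑ k ∈ Finset.range n, Real.cos (((n : ℝ) - k) * s) := by
      refine Finset.sum_congr rfl fun k _ => ?_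
      rw [show ((k : ℝ) - n) * s = -(((n : ℝ) - k) * s) by ring, Real.cos_neg]
    have hrefl := reflect_cos n s
    have hRHS : ∑ j ∈ Finset.range (n + 1), (((n : ℕ) + 1 : ℝ) - j) * Real.cos (j * s)
        = ∑ j ∈ Finset.range n, ((n : ℝ) - j) * Real.cos (j * s)
          + (∑ l ∈ Finset.range n, Real.cos (((l : ℝ) + 1) * s) + 1) := by
      have e : ∀ j : ℕ, (((n : ℕ) + 1 : ℝ) - j) * Real.cos (j * s)
          = ((n : ℝ) - j) * Real.cos ((j : ℝ) * s) + Real.cos ((j : ℝ) * s) := fun j => by ring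
      simp_rw [e, Finset.sum_add_distrib]
      have hshift : ∑ j ∈ Finset.range (n + 1), Real.cos ((j : ℝ) * s)
          = ∑ l ∈ Finset.range n, Real.cos (((l : ℝ) + 1) * s) + 1 := by
        rw [Finset.sum_range_succ' (fun j => Real.cos ((j : ℝ) * s)) n]
        push_cast
        simp
      rw [Finset.sum_range_succ (fun j => ((n : ℝ) - j) * Real.cos ((j : ℝ) * s)) n, hshift]
      simp
    rw [Finset.sum_range_succ]
    have hinner : ∀ k : ℕ, ∑ l ∈ Finset.range (n + 1), Real.cos (((k : ℝ) - l) * s)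
        = (∑ l ∈ Finset.range n, Real.cos (((k : ℝ) - l) * s)) + Real.cos (((k : ℝ) - n) * s) :=
      fun k => Finset.sum_range_succ _ n
    simp only [hinner, Finset.sum_add_distrib]
    rw [ih, hneg, hrefl]
    have hz : (((n : ℕ) : ℝ) - ((n : ℕ) : ℝ)) * s = 0 := by ring
    push_cast
    rw [hz, Real.cos_zero, hRHS]
    ring

private lemma fejer_nonneg (N : ℕ) (s : ℝ) :
    (N : ℝ) ≤ 2 * ∑ j ∈ Finset.range N, ((N : ℝ) - j) * Real.cos (j * s) := by
  have h := dsum N s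
  have hsq : ∑ k ∈ Finset.range N, ∑ l ∈ Finset.range N, Real.cos (((k : ℝ) - l) * s)
      = (∑ k ∈ Finset.range N, Real.cos (k * s)) ^ 2
        + (∑ k ∈ Finset.range N, Real.sin (k * s)) ^ 2 := by
    rw [sq, sq, Finset.sum_mul_sum, Finset.sum_mul_sum, ← Finset.sum_add_distrib]
    refine Finset.sum_congr rfl fun k _ => ?_
    rw [← Finset.sum_add_distrib]
    refine Finset.sum_congr rfl fun l _ => ?_
    rw [show ((k : ℝ) - l) * s = k * s - l * s by ring, Real.cos_sub]
  nlinarith [sq_nonneg (∑ k ∈ Finset.range N, Real.cos (k * s)),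
    sq_nonneg (∑ k ∈ Finset.range N, Real.sin (k * s))]

private lemma G_low (N : ℕ) (hN : 1 ≤ N) (s : ℝ) :
    -(1 / 2 : ℝ) ≤ ∑ j ∈ Finset.Icc 1 N, (((N : ℝ) - j) / N) * Real.cos (s * j) := by
  have hNpos : (0 : ℝ) < N := by exact_mod_cast hN
  have key := fejer_nonneg N s
  have hext : ∑ j ∈ Finset.range (N + 1), ((N : ℝ) - j) * Real.cos (j * s)
      = ∑ j ∈ Finset.range N, ((N : ℝ) - j) * Real.cos (j * s) := by
    rw [Finset.sum_range_succ]
    simp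
  have hicc : ∑ j ∈ Finset.Icc 1 N, ((N : ℝ) - j) * Real.cos ((j : ℝ) * s)
      = ∑ j ∈ Finset.range N, ((N : ℝ) - j) * Real.cos (j * s) - N := by
    rw [← Finset.Ico_add_one_right_eq_Icc, Finset.sum_Ico_eq_sum_range, ← hext,
      Finset.sum_range_succ' (fun j => ((N : ℝ) - j) * Real.cos ((j : ℝ) * s)) N]
    push_cast
    simp [add_comm]
  have hval : ∑ j ∈ Finset.Icc 1 N, (((N : ℝ) - j) / N) * Real.cos (s * j)
      = (∑ j ∈ Finset.Icc 1 N, ((N : ℝ) - j) * Real.cos ((j : ℝ) * s)) / N := by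
    rw [Finset.sum_div]
    refine Finset.sum_congr rfl fun j _ => ?_
    rw [mul_comm s (j : ℝ)]
    ring
  rw [hval, hicc, le_div_iff₀ hNpos]
  nlinarith

/-- Core inequality behind parts (1)–(2) of Lemma 3.4:
`∑_{j=1}^{N} ((N−j)/N)(cos(aj) + 1) cos(bj) ≥ −1`. -/
theorem stmt_6 (N : ℕ) (hN : 1 ≤ N) (a b : ℝ) :
    -1 ≤ ∑ j ∈ Finset.Icc 1 N,
      (((N : ℝ) - j) / N) * (Real.cos (a * j) + 1) * Real.cos (b * j) := by
  have h1 := G_low N hN (a + b)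
  have h2 := G_low N hN (a - b)
  have h3 := G_low N hN b
  have hsum : ∑ j ∈ Finset.Icc 1 N,
      (((N : ℝ) - j) / N) * (Real.cos (a * j) + 1) * Real.cos (b * j)
      = (1 / 2) * ∑ j ∈ Finset.Icc 1 N, (((N : ℝ) - j) / N) * Real.cos ((a + b) * j)
        + (1 / 2) * ∑ j ∈ Finset.Icc 1 N, (((N : ℝ) - j) / N) * Real.cos ((a - b) * j)
        + ∑ j ∈ Finset.Icc 1 N, (((N : ℝ) - j) / N) * Real.cos (b * j) := by
    rw [Finset.mul_sum, Finset.mul_sum, ← Finset.sum_add_distrib, ← Finset.sum_add_distrib]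
    refine Finset.sum_congr rfl fun j _ => ?_
    rw [show (a + b) * (j : ℝ) = a * j + b * j by ring,
      show (a - b) * (j : ℝ) = a * j - b * j by ring, Real.cos_add, Real.cos_sub]
    ring
  rw [hsum]
  linarith
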